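/- For every y = (y₁, y₂, y₃) ∈ ℝ³, the symmetric 3×3 matrix T(y) with rows [y₁² + y₂², −y₁y₂, −y₁y₃], [−y₁y₂, y₂² + y₃², −y₂y₃], [−y₁y₃, −y₂y₃, y₃² + y₁²] is positive semi-definite. -/

import Mathlib

/-- Cyclic AM–GM: `3pqr ≤ p²r + pq² + qr²` for nonnegative reals. -/
theorem amgm_cyc (p q r : ℝ) (hp : 0 ≤ p) (hq : 0 ≤ q) (hr : 0 ≤ r) :
    3 * (p * q * r) ≤ p^2*r + p*q^2 + q*r^2 := by
  nlinarith [sq_nonneg (p - q), sq_nonneg (q - r), sq_nonneg (p - r),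
    mul_nonneg hp hq, mul_nonneg hq hr, mul_nonneg hp hr,
    mul_nonneg (mul_nonneg hp hq) hr, sq_nonneg (p + q - 2*r), sq_nonneg (p - 2*q + r),
    mul_nonneg hr (sq_nonneg (p - q)), mul_nonneg hq (sq_nonneg (p - r)),
    mul_nonneg hp (sq_nonneg (q - r))]

/-- The quadratic form of `T(y)` is nonnegative (scalar form). -/
theorem keyineq (x0 x1 x2 y0 y1 y2 : ℝ) :
    0 ≤ x0 * ((y0 ^ 2 + y1 ^ 2) * x0 + -(y0 * y1) * x1 + -(y0 * y2) * x2) +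
        x1 * (-(y0 * y1) * x0 + (y1 ^ 2 + y2 ^ 2) * x1 + -(y1 * y2) * x2) +
      x2 * (-(y0 * y2) * x0 + -(y1 * y2) * x1 + (y2 ^ 2 + y0 ^ 2) * x2) := by
  rcases eq_or_ne y1 0 with h | h
  · subst h
    nlinarith [sq_nonneg (x0 * y0 - x2 * y2), sq_nonneg (x1 * y2), sq_nonneg (x2 * y0)]
  · have hA : 0 < y0 ^ 2 + y1 ^ 2 := by positivity
    have hP : 0 < y1 ^ 4 + y0 ^ 2 * y2 ^ 2 + y1 ^ 2 * y2 ^ 2 := by positivity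
    have hdet : 0 ≤ y0 ^ 4 * y2 ^ 2 + y0 ^ 2 * y1 ^ 4 + y1 ^ 2 * y2 ^ 4
        - 3 * y0 ^ 2 * y1 ^ 2 * y2 ^ 2 := by
      have := amgm_cyc (y0 ^ 2) (y1 ^ 2) (y2 ^ 2) (sq_nonneg _) (sq_nonneg _) (sq_nonneg _)
      nlinarith [this]
    nlinarith [mul_pos hA hP,
      mul_nonneg hP.le (sq_nonneg ((y0 ^ 2 + y1 ^ 2) * x0 - y0 * y1 * x1 - y0 * y2 * x2)),
      sq_nonneg ((y1 ^ 4 + y0 ^ 2 * y2 ^ 2 + y1 ^ 2 * y2 ^ 2) * x1 - y1 * y2 * (2 * y0 ^ 2 + y1 ^ 2) * x2),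
      mul_nonneg hA.le (mul_nonneg hdet (sq_nonneg x2))]

/-- The y-matrix `T(y)` of the quadratic form
`Q(ξ) = ξ₁₁² + ξ₂₂² + ξ₃₃² − 2ξ₁₁ξ₂₂ − 2ξ₂₂ξ₃₃ − 2ξ₃₃ξ₁₁ + ξ₁₂² + ξ₂₃² + ξ₃₁²`. -/
def Tmat (y : Fin 3 → ℝ) : Matrix (Fin 3) (Fin 3) ℝ :=
  !![y 0 ^ 2 + y 1 ^ 2, -(y 0 * y 1), -(y 0 * y 2);
     -(y 0 * y 1), y 1 ^ 2 + y 2 ^ 2, -(y 1 * y 2);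
     -(y 0 * y 2), -(y 1 * y 2), y 2 ^ 2 + y 0 ^ 2]

/-- for every `y ∈ ℝ³` the matrix `T(y)` is positive semi-definite. -/
theorem Tmat_posSemidef : ∀ y : Fin 3 → ℝ, (Tmat y).PosSemidef := by
  intro y
  rw [Matrix.posSemidef_iff_dotProduct_mulVec]
  constructor
  · unfold Tmat Matrix.IsHermitian
    ext i j
    fin_cases i <;> fin_cases j <;> simp [Matrix.conjTranspose_apply]
  · intro x
    simp only [Tmat, Matrix.mulVec, dotProduct, Fin.sum_univ_three,
      Matrix.cons_val', Matrix.cons_val_zero, Matrix.cons_val_one, Matrix.head_cons,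
      Matrix.empty_val', Matrix.cons_val_fin_one, Matrix.head_fin_const,
      Matrix.cons_val_two, Matrix.tail_cons, Matrix.of_apply, Pi.star_apply, star_trivial,
      RCLike.ofReal_real_eq_id, id]
    exact keyineq (x 0) (x 1) (x 2) (y 0) (y 1) (y 2)
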